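/- Let (𝒳, 𝒮) be a measurable space. If 𝒞 ⊆ 𝒮 has finite VC dimension, then 𝒞 is finitely approximable with respect to every probability measure μ on (𝒳, 𝒮). -/

import Mathlib

open MeasureTheory Set Filter

/-- `𝒞` shatters the finite set `D` if every subset of `D` is cut out by some `C ∈ 𝒞`. -/
def Shatters {X : Type*} (𝒞 : Set (Set X)) (D : Finset X) : Prop :=
  ∀ B ⊆ D, ∃ C ∈ 𝒞, ∀ x ∈ D, x ∈ C ↔ x ∈ B

/-- `𝒞` has finite VC dimension: the cardinalities of shattered finite sets are bounded. -/
def FiniteVC {X : Type*} (𝒞 : Set (Set X)) : Prop :=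
  ∃ k : ℕ, ∀ D : Finset X, Shatters 𝒞 D → D.card ≤ k

/-- `π` is a finite measurable partition of the whole space. -/
def IsFinitePartition {X : Type*} [MeasurableSpace X] (π : Set (Set X)) : Prop :=
  π.Finite ∧ (∀ A ∈ π, MeasurableSet A) ∧
    (∀ A ∈ π, ∀ B ∈ π, A ≠ B → Disjoint A B) ∧ ⋃₀ π = Set.univ

/-- The `π`-boundary of `C`: union of the cells of `π` meeting both `C` and `Cᶜ`
with positive measure. -/
def piBoundary {X : Type*} [MeasurableSpace X] (μ : Measure X) (π : Set (Set X))
    (C : Set X) : Set X :=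
  ⋃₀ {A ∈ π | 0 < μ (A ∩ C) * μ (A ∩ Cᶜ)}

/-- `𝒞` is finitely approximable w.r.t. `μ`: for every `ε > 0` there is a finite measurable
partition `π` such that `μ (∂(C : π)) ≤ ε` for every `C ∈ 𝒞`. -/
def FinitelyApproximable {X : Type*} [MeasurableSpace X] (μ : Measure X)
    (𝒞 : Set (Set X)) : Prop :=
  ∀ ε : ENNReal, 0 < ε → ∃ π : Set (Set X), IsFinitePartition π ∧
    ∀ C ∈ 𝒞, μ (piBoundary μ π C) ≤ ε

namespace VCPf

open scoped ENNReal NNReal Function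

variable {X : Type*} [MeasurableSpace X]

/-- `C` splits `A` (both parts have positive measure). -/
def Splits (μ : Measure X) (C A : Set X) : Prop := 0 < μ (A ∩ C) * μ (A ∩ Cᶜ)

lemma splits_iff {μ : Measure X} {C A : Set X} :
    Splits μ C A ↔ 0 < μ (A ∩ C) ∧ 0 < μ (A ∩ Cᶜ) :=
  ENNReal.mul_pos_iff

lemma Splits.mono {μ : Measure X} {C A B : Set X} (hAB : A ⊆ B) (h : Splits μ C A) :
    Splits μ C B := by
  rw [splits_iff] at h ⊢
  exact ⟨h.1.trans_le (measure_mono (inter_subset_inter_left _ hAB)),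
    h.2.trans_le (measure_mono (inter_subset_inter_left _ hAB))⟩

lemma piBoundary_eq (μ : Measure X) (P : Set (Set X)) (C : Set X) :
    piBoundary μ P C = ⋃₀ {A ∈ P | Splits μ C A} := rfl

lemma mem_piBoundary {μ : Measure X} {P : Set (Set X)} {C : Set X} {x : X} :
    x ∈ piBoundary μ P C ↔ ∃ A, (A ∈ P ∧ Splits μ C A) ∧ x ∈ A := by
  simp only [piBoundary_eq, mem_sUnion, mem_setOf_eq]

lemma piBoundary_subset (μ : Measure X) (P : Set (Set X)) (C : Set X) :
    piBoundary μ P C ⊆ ⋃₀ P :=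
  sUnion_subset_sUnion (sep_subset _ _)

/-- A finite measurable partition of the set `E`. -/
def IsPartOn (P : Set (Set X)) (E : Set X) : Prop :=
  P.Finite ∧ (∀ A ∈ P, MeasurableSet A) ∧
    (∀ A ∈ P, ∀ B ∈ P, A ≠ B → Disjoint A B) ∧ ⋃₀ P = E

lemma isPartOn_self {E : Set X} (hE : MeasurableSet E) : IsPartOn {E} E := by
  refine ⟨finite_singleton E, ?_, ?_, sUnion_singleton E⟩
  · rintro A rfl; exact hE
  · rintro A rfl B rfl h; exact absurd rfl h

lemma IsPartOn.cell_subset {P : Set (Set X)} {E A : Set X} (hP : IsPartOn P E) (hA : A ∈ P) :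
    A ⊆ E := hP.2.2.2 ▸ subset_sUnion_of_mem hA

/-- The greatest lower bound on the boundary mass over finite partitions of `E`. -/
noncomputable def vcBeta (μ : Measure X) (𝒞 : Set (Set X)) (E : Set X) : ℝ≥0∞ :=
  ⨅ (P : Set (Set X)) (_ : IsPartOn P E), ⨆ C ∈ 𝒞, μ (piBoundary μ P C)

lemma vcBeta_le_part (μ : Measure X) (𝒞 : Set (Set X)) {P : Set (Set X)} {E : Set X}
    (hP : IsPartOn P E) : vcBeta μ 𝒞 E ≤ ⨆ C ∈ 𝒞, μ (piBoundary μ P C) :=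
  iInf₂_le P hP

lemma vcBeta_le_measure (μ : Measure X) (𝒞 : Set (Set X)) {E : Set X}
    (hE : MeasurableSet E) : vcBeta μ 𝒞 E ≤ μ E := by
  refine (vcBeta_le_part μ 𝒞 (isPartOn_self hE)).trans (iSup₂_le fun C _ => ?_)
  refine measure_mono ((piBoundary_subset μ _ C).trans ?_)
  rw [sUnion_singleton]

lemma exists_part (μ : Measure X) [IsProbabilityMeasure μ] (𝒞 : Set (Set X)) {E : Set X}
    (hE : MeasurableSet E) {γ : ℝ≥0∞} (hγ : 0 < γ) :
    ∃ P, IsPartOn P E ∧ ∀ C ∈ 𝒞, μ (piBoundary μ P C) ≤ vcBeta μ 𝒞 E + γ := by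
  have hne : vcBeta μ 𝒞 E ≠ ∞ :=
    ((vcBeta_le_measure μ 𝒞 hE).trans_lt (measure_lt_top μ E)).ne
  have hlt : vcBeta μ 𝒞 E < vcBeta μ 𝒞 E + γ := ENNReal.lt_add_right hne hγ.ne'
  conv_lhs at hlt => rw [vcBeta]
  obtain ⟨P, hP⟩ := iInf_lt_iff.mp hlt
  obtain ⟨hPart, hlt2⟩ := iInf_lt_iff.mp hP
  refine ⟨P, hPart, fun C hC => ?_⟩
  exact le_of_lt (lt_of_le_of_lt
    (le_iSup₂ (f := fun (C : Set X) (_ : C ∈ 𝒞) => μ (piBoundary μ P C)) C hC) hlt2)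

lemma exists_splitter {μ : Measure X} {𝒞 : Set (Set X)} {E : Set X}
    (hE : MeasurableSet E) (h : 0 < vcBeta μ 𝒞 E) : ∃ C ∈ 𝒞, Splits μ C E := by
  by_contra h'
  push_neg at h'
  have hz : vcBeta μ 𝒞 E ≤ 0 := by
    refine (vcBeta_le_part μ 𝒞 (isPartOn_self hE)).trans (iSup₂_le fun C hC => ?_)
    have : {A ∈ ({E} : Set (Set X)) | Splits μ C A} = ∅ := by
      ext A
      simp only [mem_setOf_eq, mem_singleton_iff, mem_empty_iff_false, iff_false, not_and]
      rintro rfl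
      exact h' C hC
    rw [piBoundary_eq, this]
    simp
  exact absurd (hz.trans_lt h).false (by simp)

lemma vcBeta_mono (μ : Measure X) (𝒞 : Set (Set X)) {E' E : Set X}
    (hE' : MeasurableSet E') (hsub : E' ⊆ E) : vcBeta μ 𝒞 E' ≤ vcBeta μ 𝒞 E := by
  refine le_iInf₂ fun P hP => ?_
  have hP' : IsPartOn ((fun A => A ∩ E') '' P) E' := by
    refine ⟨hP.1.image _, ?_, ?_, ?_⟩
    · rintro A ⟨B, hB, rfl⟩
      exact (hP.2.1 B hB).inter hE'
    · rintro A ⟨A₀, hA₀, rfl⟩ B ⟨B₀, hB₀, rfl⟩ hne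
      have : A₀ ≠ B₀ := by rintro rfl; exact hne rfl
      exact ((hP.2.2.1 A₀ hA₀ B₀ hB₀ this).mono inter_subset_left inter_subset_left)
    · ext x
      simp only [sUnion_image, mem_iUnion, mem_inter_iff, exists_prop]
      constructor
      · rintro ⟨A, hA, hxA, hxE'⟩; exact hxE'
      · intro hx
        have hxE : x ∈ ⋃₀ P := by rw [hP.2.2.2]; exact hsub hx
        obtain ⟨A, hA, hxA⟩ := hxE
        exact ⟨A, hA, hxA, hx⟩
  refine (vcBeta_le_part μ 𝒞 hP').trans (iSup₂_mono fun C _ => measure_mono ?_)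
  intro x hx
  rw [mem_piBoundary] at hx ⊢
  obtain ⟨A, ⟨⟨A₀, hA₀, rfl⟩, hsplit⟩, hxA⟩ := hx
  exact ⟨A₀, ⟨hA₀, hsplit.mono inter_subset_left⟩, hxA.1⟩

lemma vcBeta_union_le (μ : Measure X) [IsProbabilityMeasure μ] (𝒞 : Set (Set X))
    {E₁ E₂ : Set X} (h₁ : MeasurableSet E₁) (h₂ : MeasurableSet E₂)
    (hd : Disjoint E₁ E₂) :
    vcBeta μ 𝒞 (E₁ ∪ E₂) ≤ vcBeta μ 𝒞 E₁ + vcBeta μ 𝒞 E₂ := by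
  refine ENNReal.le_of_forall_pos_le_add fun γ hγ _ => ?_
  have hγ2 : (0:ℝ≥0∞) < γ / 2 := by
    simp only [ENNReal.div_pos_iff]
    exact ⟨by exact_mod_cast hγ.ne', by norm_num⟩
  obtain ⟨P₁, hP₁, hb₁⟩ := exists_part μ 𝒞 h₁ hγ2
  obtain ⟨P₂, hP₂, hb₂⟩ := exists_part μ 𝒞 h₂ hγ2
  have hPart : IsPartOn (P₁ ∪ P₂) (E₁ ∪ E₂) := by
    refine ⟨hP₁.1.union hP₂.1, ?_, ?_, ?_⟩
    · rintro A (hA | hA)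
      exacts [hP₁.2.1 A hA, hP₂.2.1 A hA]
    · rintro A (hA | hA) B (hB | hB) hne
      · exact hP₁.2.2.1 A hA B hB hne
      · exact hd.mono (hP₁.cell_subset hA) (hP₂.cell_subset hB)
      · exact (hd.mono (hP₁.cell_subset hB) (hP₂.cell_subset hA)).symm
      · exact hP₂.2.2.1 A hA B hB hne
    · rw [sUnion_union, hP₁.2.2.2, hP₂.2.2.2]
  refine (vcBeta_le_part μ 𝒞 hPart).trans (iSup₂_le fun C hC => ?_)
  have hsub : piBoundary μ (P₁ ∪ P₂) C ⊆ piBoundary μ P₁ C ∪ piBoundary μ P₂ C := by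
    intro x hx
    rw [mem_piBoundary] at hx
    obtain ⟨A, ⟨hA | hA, hsplit⟩, hxA⟩ := hx
    · exact Or.inl (mem_piBoundary.mpr ⟨A, ⟨hA, hsplit⟩, hxA⟩)
    · exact Or.inr (mem_piBoundary.mpr ⟨A, ⟨hA, hsplit⟩, hxA⟩)
  calc μ (piBoundary μ (P₁ ∪ P₂) C) ≤ μ (piBoundary μ P₁ C) + μ (piBoundary μ P₂ C) :=
        (measure_mono hsub).trans (measure_union_le _ _)
    _ ≤ (vcBeta μ 𝒞 E₁ + γ / 2) + (vcBeta μ 𝒞 E₂ + γ / 2) := add_le_add (hb₁ C hC) (hb₂ C hC)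
    _ = vcBeta μ 𝒞 E₁ + vcBeta μ 𝒞 E₂ + (γ / 2 + γ / 2) := by ring
    _ = vcBeta μ 𝒞 E₁ + vcBeta μ 𝒞 E₂ + γ := by rw [ENNReal.add_halves]

lemma countable_of_disjoint_pos {μ : Measure X} [IsFiniteMeasure μ] {F : Set (Set X)}
    (hmeas : ∀ A ∈ F, MeasurableSet A) (hdisj : F.PairwiseDisjoint id)
    (hpos : ∀ A ∈ F, 0 < μ A) : F.Countable := by
  have key := MeasureTheory.Measure.countable_meas_pos_of_disjoint_iUnion (μ := μ)
    (As := fun A : F => (A : Set X)) (fun i => hmeas i i.2) ?_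
  · rw [← Set.countable_coe_iff]
    have : {i : F | 0 < μ (i : Set X)} = Set.univ := by
      ext i; simp [hpos i i.2]
    rw [this] at key
    exact (Set.countable_univ_iff).mp key
  · intro i j hij
    exact hdisj i.2 j.2 (fun h => hij (Subtype.ext h))

lemma exists_maxdisj (p : Set X → Prop) :
    ∃ F : Set (Set X), (∀ A ∈ F, p A) ∧ F.PairwiseDisjoint id ∧
      ∀ A, p A → (∀ B ∈ F, Disjoint A B) → A ∈ F := by
  have hz : ∀ c ⊆ {F : Set (Set X) | (∀ A ∈ F, p A) ∧ F.PairwiseDisjoint id},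
      IsChain (· ⊆ ·) c →
      ∃ ub ∈ {F : Set (Set X) | (∀ A ∈ F, p A) ∧ F.PairwiseDisjoint id}, ∀ s ∈ c, s ⊆ ub := by
    intro c hcS hchain
    refine ⟨⋃₀ c, ⟨⟨?_, ?_⟩, fun s hs => subset_sUnion_of_mem hs⟩⟩
    · rintro A ⟨F₀, hF₀, hA⟩
      exact (hcS hF₀).1 A hA
    · rintro A ⟨F₁, hF₁, hA⟩ B ⟨F₂, hF₂, hB⟩ hne
      rcases hchain.total hF₁ hF₂ with h | h
      · exact (hcS hF₂).2 (h hA) hB hne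
      · exact (hcS hF₁).2 hA (h hB) hne
  obtain ⟨F, hF⟩ := zorn_subset {F : Set (Set X) | (∀ A ∈ F, p A) ∧ F.PairwiseDisjoint id} hz
  refine ⟨F, hF.prop.1, hF.prop.2, fun A hpA hdA => ?_⟩
  have hins : insert A F ∈ {F : Set (Set X) | (∀ A ∈ F, p A) ∧ F.PairwiseDisjoint id} := by
    constructor
    · rintro B (rfl | hB)
      · exact hpA
      · exact hF.prop.1 B hB
    · exact hF.prop.2.insert (fun B hB _ => hdA B hB)
  exact hF.2 hins (Set.subset_insert A F) (mem_insert A F)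

section Region

variable {μ : Measure X} {𝒞 : Set (Set X)} {W : Set X}

/-- Inside a region where everything positive is split, we can find arbitrary small
positive pieces. -/
lemma exists_small_subset [IsProbabilityMeasure μ]
    (hsplit : ∀ E, MeasurableSet E → E ⊆ W → 0 < μ E → ∃ C ∈ 𝒞, MeasurableSet C ∧ Splits μ C E)
    {E : Set X} (hE : MeasurableSet E) (hEW : E ⊆ W) (hpos : 0 < μ E)
    {η : ℝ≥0∞} (hη : 0 < η) :
    ∃ A, A ⊆ E ∧ MeasurableSet A ∧ 0 < μ A ∧ μ A ≤ η := by
  obtain ⟨k, hk⟩ := ENNReal.exists_inv_two_pow_lt hη.ne'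
  suffices H : ∀ k : ℕ, ∃ A, A ⊆ E ∧ MeasurableSet A ∧ 0 < μ A ∧ μ A ≤ 2⁻¹ ^ k by
    obtain ⟨A, h1, h2, h3, h4⟩ := H k
    exact ⟨A, h1, h2, h3, h4.trans hk.le⟩
  intro k
  induction k with
  | zero => exact ⟨E, subset_rfl, hE, hpos, by simpa using prob_le_one⟩
  | succ k ih =>
    obtain ⟨A, hAE, hAm, hApos, hAle⟩ := ih
    obtain ⟨C, _, hCm, hCs⟩ := hsplit A hAm (hAE.trans hEW) hApos
    rw [splits_iff] at hCs
    have hsum : μ (A ∩ C) + μ (A ∩ Cᶜ) = μ A := by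
      rw [← Set.diff_eq]
      exact measure_inter_add_diff A hCm
    have hhalf : ∀ {S T : Set X}, μ S + μ T = μ A → μ S ≤ μ T →
        μ S ≤ 2⁻¹ ^ (k + 1) := by
      intro S T hST hle
      have h2 : μ S + μ S ≤ μ A := by
        calc μ S + μ S ≤ μ S + μ T := add_le_add_right hle _
          _ = μ A := hST
      have h3 : μ S * 2 ≤ 2⁻¹ ^ k := by
        rw [mul_two]
        exact h2.trans hAle
      have h4 : μ S ≤ 2⁻¹ ^ k / 2 := by
        rw [ENNReal.le_div_iff_mul_le (Or.inl two_ne_zero) (Or.inl ENNReal.ofNat_ne_top)]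
        exact h3
      calc μ S ≤ 2⁻¹ ^ k / 2 := h4
        _ = 2⁻¹ ^ (k + 1) := by
          rw [pow_succ, div_eq_mul_inv]
    rcases le_total (μ (A ∩ C)) (μ (A ∩ Cᶜ)) with h | h
    · exact ⟨A ∩ C, inter_subset_left.trans hAE, hAm.inter hCm, hCs.1, hhalf hsum h⟩
    · exact ⟨A ∩ Cᶜ, inter_subset_left.trans hAE, hAm.inter hCm.compl, hCs.2,
        hhalf (by rw [add_comm]; exact hsum) h⟩

/-- Sierpinski-lite: inside such a region, we can find subsets with measure in a window. -/
lemma exists_window_subset [IsProbabilityMeasure μ]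
    (hsplit : ∀ E, MeasurableSet E → E ⊆ W → 0 < μ E → ∃ C ∈ 𝒞, MeasurableSet C ∧ Splits μ C E)
    {R : Set X} (hR : MeasurableSet R) (hRW : R ⊆ W)
    {c : ℝ≥0∞} (hc0 : 0 < c) (hcR : c ≤ μ R) :
    ∃ A, A ⊆ R ∧ MeasurableSet A ∧ c / 4 ≤ μ A ∧ μ A ≤ c := by
  classical
  have hctop : c ≠ ∞ := (hcR.trans_lt (measure_lt_top μ R)).ne
  have hc2 : (0:ℝ≥0∞) < c / 2 := ENNReal.half_pos hc0.ne'
  -- maximal disjoint family of pieces of measure ≤ c/2 inside R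
  obtain ⟨F, hFp, hFdisj, hFmax⟩ := exists_maxdisj
    (p := fun A => A ⊆ R ∧ MeasurableSet A ∧ 0 < μ A ∧ μ A ≤ c / 2)
  have hFc : F.Countable :=
    countable_of_disjoint_pos (fun A hA => (hFp A hA).2.1) hFdisj (fun A hA => (hFp A hA).2.2.1)
  have hFU_meas : MeasurableSet (⋃₀ F) := MeasurableSet.sUnion hFc fun A hA => (hFp A hA).2.1
  have hFU_sub : ⋃₀ F ⊆ R := sUnion_subset fun A hA => (hFp A hA).1
  -- the remainder is null
  have hrem : μ (R \ ⋃₀ F) = 0 := by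
    by_contra hne
    have hpos' : 0 < μ (R \ ⋃₀ F) := pos_iff_ne_zero.mpr hne
    obtain ⟨A, hAsub, hAm, hApos, hAle⟩ := exists_small_subset hsplit (hR.diff hFU_meas)
      ((diff_subset).trans hRW) hpos' hc2
    have hdisjF : ∀ B ∈ F, Disjoint A B := by
      intro B hB
      exact (disjoint_sdiff_left.mono_right (subset_sUnion_of_mem hB)).mono_left hAsub
    have hmem : A ∈ F := hFmax A ⟨hAsub.trans diff_subset, hAm, hApos, hAle⟩ hdisjF
    have h0 : μ A = 0 := measure_mono_null
      (subset_inter hAsub (subset_sUnion_of_mem hmem))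
      (by rw [Set.diff_inter_self]; exact measure_empty)
    exact hApos.ne' h0
  have hcov : c ≤ μ (⋃₀ F) := by
    have : μ R ≤ μ (⋃₀ F) := by
      have hRsplit : R = ⋃₀ F ∪ (R \ ⋃₀ F) := by
        rw [union_diff_cancel' (le_refl _) hFU_sub]
      calc μ R = μ (⋃₀ F ∪ (R \ ⋃₀ F)) := by rw [← hRsplit]
        _ ≤ μ (⋃₀ F) + μ (R \ ⋃₀ F) := measure_union_le _ _
        _ = μ (⋃₀ F) := by rw [hrem, add_zero]
    exact hcR.trans this
  have hFne : F.Nonempty := by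
    rcases Set.eq_empty_or_nonempty F with rfl | h
    · simp only [sUnion_empty, measure_empty] at hcov
      exact absurd (hc0.trans_le hcov).false (by simp)
    · exact h
  obtain ⟨f, hf⟩ := Set.Countable.exists_eq_range hFc hFne
  have hfF : ∀ j, f j ∈ F := fun j => hf ▸ mem_range_self j
  have hAccm : ∀ N, MeasurableSet (Set.accumulate f N) :=
    fun N => MeasurableSet.biUnion (to_countable _) fun j _ => (hFp (f j) (hfF j)).2.1
  have hAccR : ∀ N, Set.accumulate f N ⊆ R := by
    intro N x hx
    obtain ⟨j, _, hj⟩ := mem_iUnion₂.mp hx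
    exact (hFp (f j) (hfF j)).1 hj
  have hUacc : ⋃ i, f i = ⋃₀ F := by
    rw [hf, sUnion_range]
  -- some finite stage has measure > c/4
  have hc42 : c / 4 ≤ c / 2 := ENNReal.div_le_div_left (by norm_num) c
  have hc4 : c / 4 < c := hc42.trans_lt (ENNReal.half_lt_self hc0.ne' hctop)
  have hex : ∃ N, c / 4 < μ (Set.accumulate f N) := by
    have htd : Tendsto (fun N => μ (Set.accumulate f N)) atTop (nhds (μ (⋃₀ F))) := by
      have := MeasureTheory.tendsto_measure_iUnion_accumulate (μ := μ) (f := f)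
      rwa [hUacc] at this
    have hlt : c / 4 < μ (⋃₀ F) := hc4.trans_le hcov
    exact (htd.eventually (eventually_gt_nhds hlt)).exists
  have hN₀spec : c / 4 < μ (Set.accumulate f (Nat.find hex)) := Nat.find_spec hex
  refine ⟨Set.accumulate f (Nat.find hex), hAccR _, hAccm _, hN₀spec.le, ?_⟩
  rcases Nat.eq_zero_or_pos (Nat.find hex) with h0 | hpos'
  · rw [h0]
    have hacc0 : Set.accumulate f 0 = f 0 := by
      ext z
      simp only [Set.mem_accumulate, Nat.le_zero, exists_prop, exists_eq_left]
    rw [hacc0]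
    exact ((hFp (f 0) (hfF 0)).2.2.2).trans (ENNReal.half_le_self)
  · obtain ⟨M, hM⟩ : ∃ M, Nat.find hex = M + 1 := ⟨Nat.find hex - 1, by omega⟩
    rw [hM]
    have hMlt : ¬ c / 4 < μ (Set.accumulate f M) := Nat.find_min hex (by omega)
    push_neg at hMlt
    have hstep : Set.accumulate f (M + 1) = Set.accumulate f M ∪ f (M + 1) := by
      ext z
      simp only [Set.mem_accumulate, mem_union]
      constructor
      · rintro ⟨y, hy, hz⟩
        rcases Nat.lt_or_ge y (M + 1) with h | h
        · exact Or.inl ⟨y, by omega, hz⟩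
        · have hy' : y = M + 1 := by omega
          exact Or.inr (hy' ▸ hz)
      · rintro (⟨y, hy, hz⟩ | hz)
        · exact ⟨y, by omega, hz⟩
        · exact ⟨M + 1, le_rfl, hz⟩
    calc μ (Set.accumulate f (M + 1)) ≤ μ (Set.accumulate f M) + μ (f (M + 1)) := by
          rw [hstep]; exact measure_union_le _ _
      _ ≤ c / 4 + c / 2 := add_le_add hMlt (hFp (f (M + 1)) (hfF (M + 1))).2.2.2
      _ ≤ c / 2 + c / 2 := add_le_add_left hc42 _
      _ = c := ENNReal.add_halves c

end Region


lemma vcBeta_sUnion_smalls (μ : Measure X) [IsProbabilityMeasure μ] (𝒞 : Set (Set X))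
    {δ : ℝ≥0∞} {F : Set (Set X)} (hFc : F.Countable) (hdisj : F.PairwiseDisjoint id)
    (hmem : ∀ A ∈ F, MeasurableSet A ∧ vcBeta μ 𝒞 A ≤ δ * μ A)
    {γ : ℝ≥0∞} (hγ : 0 < γ) :
    vcBeta μ 𝒞 (⋃₀ F) ≤ δ * μ (⋃₀ F) + γ := by
  classical
  rcases Set.eq_empty_or_nonempty F with rfl | hFne
  · rw [sUnion_empty]
    refine le_trans (vcBeta_le_measure μ 𝒞 MeasurableSet.empty) ?_
    simp
  obtain ⟨f, hf⟩ := Set.Countable.exists_eq_range hFc hFne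
  have hfF : ∀ j, f j ∈ F := fun j => hf ▸ mem_range_self j
  have hfm : ∀ j, MeasurableSet (f j) := fun j => (hmem _ (hfF j)).1
  have hUeq : ⋃ i, f i = ⋃₀ F := by rw [hf, sUnion_range]
  have hFU_meas : MeasurableSet (⋃₀ F) := by rw [← hUeq]; exact MeasurableSet.iUnion hfm
  have hAccm : ∀ N, MeasurableSet (Set.accumulate f N) :=
    fun N => MeasurableSet.biUnion (to_countable _) fun j _ => hfm j
  -- tail is eventually small
  have hIter : ⋂ N, (⋃₀ F \ Set.accumulate f N) = ∅ := by
    rw [← diff_iUnion, Set.iUnion_accumulate, hUeq, diff_self]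
  have htd : Tendsto (fun N => μ (⋃₀ F \ Set.accumulate f N)) atTop (nhds 0) := by
    have := MeasureTheory.tendsto_measure_iInter_atTop (μ := μ)
      (s := fun N => ⋃₀ F \ Set.accumulate f N)
      (fun N => (hFU_meas.diff (hAccm N)).nullMeasurableSet)
      (fun i j hij => diff_subset_diff_right (Set.monotone_accumulate hij))
      ⟨0, measure_ne_top μ _⟩
    rwa [hIter, measure_empty] at this
  have hγ2 : (0:ℝ≥0∞) < γ / 2 := ENNReal.half_pos hγ.ne'
  obtain ⟨N, hN⟩ : ∃ N, μ (⋃₀ F \ Set.accumulate f N) < γ / 2 :=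
    (htd.eventually (eventually_lt_nhds hγ2)).exists
  set γ' : ℝ≥0∞ := γ / 2 / (N + 1 : ℕ) with hγ'def
  have hγ'pos : 0 < γ' := ENNReal.div_pos hγ2.ne' (by simp)
  -- choose good partitions of the members
  have hch : ∀ A : Set X, A ∈ F → ∃ P, IsPartOn P A ∧
      ∀ C ∈ 𝒞, μ (piBoundary μ P C) ≤ δ * μ A + γ' := by
    intro A hA
    obtain ⟨P, h1, h2⟩ := exists_part μ 𝒞 (hmem A hA).1 hγ'pos
    exact ⟨P, h1, fun C hC => (h2 C hC).trans (add_le_add_left (hmem A hA).2 _)⟩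
  choose! ρ hρ₁ hρ₂ using hch
  set g : Finset (Set X) := (Finset.range (N + 1)).image f with hgdef
  have hgF : ∀ A ∈ g, A ∈ F := by
    intro A hA
    obtain ⟨j, _, rfl⟩ := Finset.mem_image.mp hA
    exact hfF j
  have hgU : ⋃ A ∈ g, A = Set.accumulate f N := by
    ext z
    simp only [mem_iUnion, exists_prop, Set.mem_accumulate, hgdef, Finset.mem_image,
      Finset.mem_range]
    constructor
    · rintro ⟨A, ⟨j, hj, rfl⟩, hz⟩
      exact ⟨j, by omega, hz⟩
    · rintro ⟨j, hj, hz⟩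
      exact ⟨f j, ⟨j, by omega, rfl⟩, hz⟩
  set D : Set X := ⋃₀ F \ Set.accumulate f N with hDdef
  have hAccsub : Set.accumulate f N ⊆ ⋃₀ F := by
    rw [← hUeq]; exact Set.accumulate_subset_iUnion N
  -- assemble the partition
  set P : Set (Set X) := (⋃ A ∈ g, ρ A) ∪ {D} with hPdef
  have memU : ∀ {B : Set X}, B ∈ (⋃ A ∈ g, ρ A) ↔ ∃ A ∈ g, B ∈ ρ A := by
    intro B; simp
  have hPart : IsPartOn P (⋃₀ F) := by
    refine ⟨?_, ?_, ?_, ?_⟩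
    · apply Set.Finite.union
      · exact Set.Finite.biUnion g.finite_toSet fun A hA => (hρ₁ A (hgF A hA)).1
      · exact finite_singleton D
    · rintro A (hA | rfl)
      · obtain ⟨B, hB, hAB⟩ := memU.mp hA
        exact (hρ₁ B (hgF B hB)).2.1 A hAB
      · exact hFU_meas.diff (hAccm N)
    · have cellsub : ∀ A ∈ g, ∀ B ∈ ρ A, B ⊆ A :=
        fun A hA B hB => (hρ₁ A (hgF A hA)).cell_subset hB
      rintro A₁ (hA₁ | rfl) A₂ (hA₂ | rfl) hne
      · obtain ⟨B₁, hB₁, hAB₁⟩ := memU.mp hA₁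
        obtain ⟨B₂, hB₂, hAB₂⟩ := memU.mp hA₂
        by_cases hBB : B₁ = B₂
        · subst hBB
          exact (hρ₁ B₁ (hgF B₁ hB₁)).2.2.1 A₁ hAB₁ A₂ hAB₂ hne
        · exact (hdisj (hgF B₁ hB₁) (hgF B₂ hB₂) hBB).mono
            (cellsub B₁ hB₁ A₁ hAB₁) (cellsub B₂ hB₂ A₂ hAB₂)
      · obtain ⟨B₁, hB₁, hAB₁⟩ := memU.mp hA₁
        refine disjoint_sdiff_right.mono_left ((cellsub B₁ hB₁ A₁ hAB₁).trans ?_)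
        rw [← hgU]
        exact subset_iUnion₂ (s := fun A _ => A) B₁ hB₁
      · obtain ⟨B₂, hB₂, hAB₂⟩ := memU.mp hA₂
        refine (disjoint_sdiff_right.mono_left ((cellsub B₂ hB₂ A₂ hAB₂).trans ?_)).symm
        rw [← hgU]
        exact subset_iUnion₂ (s := fun A _ => A) B₂ hB₂
      · exact absurd rfl hne
    · have h1 : ⋃₀ P = (⋃ A ∈ g, ⋃₀ ρ A) ∪ D := by
        rw [hPdef, sUnion_union, sUnion_singleton]
        congr 1
        ext z
        simp only [mem_sUnion, mem_iUnion, exists_prop]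
        constructor
        · rintro ⟨B, hB, hz⟩
          obtain ⟨A, hA, hBA⟩ := hB
          exact ⟨A, hA, B, hBA, hz⟩
        · rintro ⟨A, hA, B, hBA, hz⟩
          exact ⟨B, ⟨A, hA, hBA⟩, hz⟩
      rw [h1]
      have h2 : ∀ A ∈ g, ⋃₀ ρ A = A := fun A hA => (hρ₁ A (hgF A hA)).2.2.2
      have h3 : (⋃ A ∈ g, ⋃₀ ρ A) = ⋃ A ∈ g, A := iUnion₂_congr h2
      rw [h3, hgU, hDdef, union_diff_cancel hAccsub]
  -- bound the boundary
  refine (vcBeta_le_part μ 𝒞 hPart).trans (iSup₂_le fun C hC => ?_)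
  have hsub : piBoundary μ P C ⊆ (⋃ A ∈ g, piBoundary μ (ρ A) C) ∪ D := by
    intro x hx
    rw [mem_piBoundary] at hx
    obtain ⟨B, ⟨hBP, hBsplit⟩, hxB⟩ := hx
    rcases hBP with hB | rfl
    · obtain ⟨A, hA, hBA⟩ := memU.mp hB
      exact Or.inl (mem_iUnion₂.mpr ⟨A, hA, mem_piBoundary.mpr ⟨B, ⟨hBA, hBsplit⟩, hxB⟩⟩)
    · exact Or.inr hxB
  have hgdisj : (↑g : Set (Set X)).PairwiseDisjoint id :=
    fun A hA B hB hne => hdisj (hgF A hA) (hgF B hB) hne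
  calc μ (piBoundary μ P C)
      ≤ μ (⋃ A ∈ g, piBoundary μ (ρ A) C) + μ D :=
        (measure_mono hsub).trans (measure_union_le _ _)
    _ ≤ (∑ A ∈ g, μ (piBoundary μ (ρ A) C)) + μ D :=
        add_le_add_left (measure_biUnion_finset_le g _) _
    _ ≤ (∑ A ∈ g, (δ * μ A + γ')) + γ / 2 := by
        refine add_le_add (Finset.sum_le_sum fun A hA => hρ₂ A (hgF A hA) C hC) hN.le
    _ = (δ * ∑ A ∈ g, μ A + g.card • γ') + γ / 2 := by
        rw [Finset.sum_add_distrib, Finset.mul_sum, Finset.sum_const]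
    _ ≤ (δ * μ (⋃₀ F) + γ / 2) + γ / 2 := by
        refine add_le_add (add_le_add ?_ ?_) le_rfl
        · refine mul_le_mul_right ?_ δ
          have hsum : ∑ A ∈ g, μ A = μ (⋃ A ∈ g, A) :=
            (measure_biUnion_finset hgdisj fun A hA => (hmem A (hgF A hA)).1).symm
          rw [hsum, hgU]
          exact measure_mono hAccsub
        · have hcard : g.card ≤ N + 1 := le_trans (Finset.card_image_le) (by simp)
          calc (g.card • γ' : ℝ≥0∞) = (g.card : ℝ≥0∞) * γ' := by rw [nsmul_eq_mul]
            _ ≤ ((N + 1 : ℕ) : ℝ≥0∞) * γ' := by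
                exact mul_le_mul_left (by exact_mod_cast hcard) γ'
            _ ≤ γ / 2 := ENNReal.mul_div_le
    _ = δ * μ (⋃₀ F) + γ := by rw [add_assoc, ENNReal.add_halves]

section Pieces

variable {μ : Measure X} {𝒞 : Set (Set X)} {W : Set X}

lemma exists_disjoint_pieces [IsProbabilityMeasure μ]
    (hsplit : ∀ E, MeasurableSet E → E ⊆ W → 0 < μ E → ∃ C ∈ 𝒞, MeasurableSet C ∧ Splits μ C E)
    (hW : MeasurableSet W) (hWpos : 0 < μ W) (n : ℕ) :
    ∃ R : Fin n → Set X, (∀ i, MeasurableSet (R i) ∧ 0 < μ (R i) ∧ R i ⊆ W) ∧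
      Pairwise (Disjoint on R) := by
  classical
  set η : ℝ≥0∞ := (μ W / 2) / (n + 1 : ℕ) with hηdef
  have hη0 : 0 < η := ENNReal.div_pos (ENNReal.half_pos hWpos.ne').ne' (by simp)
  have hcap : ((n + 1 : ℕ) : ℝ≥0∞) * η ≤ μ W / 2 := ENNReal.mul_div_le
  suffices H : ∀ j : ℕ, j ≤ n → ∃ R : ℕ → Set X,
      (∀ i < j, MeasurableSet (R i) ∧ 0 < μ (R i) ∧ R i ⊆ W) ∧
      (∀ i, j ≤ i → R i = ∅) ∧ Pairwise (Disjoint on R) ∧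
      μ (⋃ i, R i) ≤ (j : ℝ≥0∞) * η by
    obtain ⟨R, h1, _, h3, _⟩ := H n le_rfl
    exact ⟨fun i => R i.val, fun i => h1 i.val i.isLt,
      fun i i' hne => h3 (fun h => hne (Fin.ext h))⟩
  intro j
  induction j with
  | zero =>
    intro _
    refine ⟨fun _ => ∅, by omega, fun _ _ => rfl, fun i i' _ => by
      simp [Function.onFun], by simp⟩
  | succ j ih =>
    intro hj
    obtain ⟨R, h1, h2, h3, h4⟩ := ih (by omega)
    have hRU_meas : MeasurableSet (⋃ i, R i) := by
      apply MeasurableSet.iUnion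
      intro i
      rcases Nat.lt_or_ge i j with h | h
      · exact (h1 i h).1
      · rw [h2 i h]; exact MeasurableSet.empty
    have hlt : μ (⋃ i, R i) < μ W := by
      refine lt_of_le_of_lt h4 (lt_of_le_of_lt ?_ (ENNReal.half_lt_self hWpos.ne'
        (measure_ne_top μ W)))
      refine le_trans ?_ hcap
      exact mul_le_mul_left (by exact_mod_cast by omega : (j:ℝ≥0∞) ≤ ((n+1:ℕ):ℝ≥0∞)) η
    have hWr : 0 < μ (W \ ⋃ i, R i) := by
      by_contra h
      push_neg at h
      have h0 : μ (W \ ⋃ i, R i) = 0 := le_antisymm h zero_le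
      have : μ W ≤ μ (⋃ i, R i) := by
        calc μ W ≤ μ ((W \ ⋃ i, R i) ∪ ⋃ i, R i) := measure_mono (by
          intro x hx
          by_cases hxR : x ∈ ⋃ i, R i
          · exact Or.inr hxR
          · exact Or.inl ⟨hx, hxR⟩)
        _ ≤ μ (W \ ⋃ i, R i) + μ (⋃ i, R i) := measure_union_le _ _
        _ = μ (⋃ i, R i) := by rw [h0, zero_add]
      exact absurd (this.trans_lt hlt).false (by simp)
    obtain ⟨A, hAsub, hAm, hApos, hAle⟩ := exists_small_subset hsplit (hW.diff hRU_meas)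
      (diff_subset.trans subset_rfl) hWr hη0
    refine ⟨Function.update R j A, ?_, ?_, ?_, ?_⟩
    · intro i hi
      rcases Nat.lt_or_ge i j with h | h
      · rw [Function.update_of_ne (by omega)]
        exact h1 i h
      · have : i = j := by omega
        subst this
        rw [Function.update_self]
        exact ⟨hAm, hApos, hAsub.trans diff_subset⟩
    · intro i hi
      rw [Function.update_of_ne (by omega)]
      exact h2 i (by omega)
    · intro i i' hne
      have key : ∀ b, Disjoint A (R b) := fun b =>
        (disjoint_sdiff_left.mono_left hAsub).mono_right (subset_iUnion R b)
      simp only [Function.onFun]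
      by_cases hij : i = j
      · subst hij
        rw [Function.update_self, Function.update_of_ne (Ne.symm hne)]
        exact key i'
      · rw [Function.update_of_ne hij]
        by_cases hij' : i' = j
        · subst hij'
          rw [Function.update_self]
          exact (key i).symm
        · rw [Function.update_of_ne hij']
          exact h3 hne
    · have hsub2 : (⋃ i, Function.update R j A i) ⊆ (⋃ i, R i) ∪ A := by
        intro x hx
        obtain ⟨i, hi⟩ := mem_iUnion.mp hx
        by_cases hij : i = j
        · subst hij; rw [Function.update_self] at hi; exact Or.inr hi
        · rw [Function.update_of_ne hij] at hi; exact Or.inl (mem_iUnion.mpr ⟨i, hi⟩)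
      calc μ (⋃ i, Function.update R j A i) ≤ μ (⋃ i, R i) + μ A :=
            (measure_mono hsub2).trans (measure_union_le _ _)
        _ ≤ (j : ℝ≥0∞) * η + η := add_le_add h4 hAle
        _ = ((j + 1 : ℕ) : ℝ≥0∞) * η := by push_cast; ring

end Pieces

lemma dead_process {μ : Measure X} {𝒞 : Set (Set X)} {W : Set X} {m : ℕ}
    (HFail : ∀ Q : Fin m → Set X,
      (∀ i, MeasurableSet (Q i) ∧ 0 < μ (Q i) ∧ Q i ⊆ W) → Pairwise (Disjoint on Q) →
      ∃ Q' : Fin m → Set X, (∀ i, MeasurableSet (Q' i) ∧ 0 < μ (Q' i) ∧ Q' i ⊆ Q i) ∧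
        ∀ C ∈ 𝒞, ∃ i, ¬ Splits μ C (Q' i))
    {n : ℕ} (L : List (Finset (Fin n))) (hL : ∀ σ ∈ L, σ.card = m)
    (T : Fin n → Set X) (hT : ∀ i, MeasurableSet (T i) ∧ 0 < μ (T i) ∧ T i ⊆ W)
    (hTd : Pairwise (Disjoint on T)) :
    ∃ T' : Fin n → Set X, (∀ i, MeasurableSet (T' i) ∧ 0 < μ (T' i) ∧ T' i ⊆ T i) ∧
      ∀ σ ∈ L, ∀ C ∈ 𝒞, ∃ i ∈ σ, ¬ Splits μ C (T' i) := by
  classical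
  induction L generalizing T with
  | nil => exact ⟨T, fun i => ⟨(hT i).1, (hT i).2.1, subset_rfl⟩, by simp⟩
  | cons σ L ih =>
    have hσ : σ.card = m := hL σ (by simp)
    set e := σ.orderIsoOfFin hσ with hedef
    have hQp : ∀ j : Fin m, MeasurableSet (T (e j)) ∧ 0 < μ (T (e j)) ∧ T (e j) ⊆ W :=
      fun j => hT _
    have hQd : Pairwise (Disjoint on fun j : Fin m => T (e j)) := by
      intro j j' hne
      exact hTd (fun h => hne (e.injective (Subtype.ext h)))
    obtain ⟨Q', hQ'p, hdead⟩ := HFail (fun j => T (e j)) hQp hQd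
    set T₁ : Fin n → Set X := fun i => if h : i ∈ σ then Q' (e.symm ⟨i, h⟩) else T i with hT₁
    have hT₁val : ∀ (j : Fin m), T₁ ((e j : σ) : Fin n) = Q' j := by
      intro j
      have h1 : ((e j : σ) : Fin n) ∈ σ := (e j).2
      have h2 : (⟨((e j : σ) : Fin n), h1⟩ : σ) = e j := Subtype.ext rfl
      simp only [hT₁, dif_pos h1, h2, OrderIso.symm_apply_apply]
    have hT₁sub : ∀ i, T₁ i ⊆ T i := by
      intro i
      by_cases h : i ∈ σ
      · simp only [hT₁, dif_pos h]
        have h3 := (hQ'p (e.symm ⟨i, h⟩)).2.2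
        have h4 : ((e (e.symm ⟨i, h⟩) : σ) : Fin n) = i := by
          rw [OrderIso.apply_symm_apply]
        rw [h4] at h3
        exact h3
      · simp [hT₁, dif_neg h]
    have hT₁p : ∀ i, MeasurableSet (T₁ i) ∧ 0 < μ (T₁ i) ∧ T₁ i ⊆ W := by
      intro i
      refine ⟨?_, ?_, (hT₁sub i).trans (hT i).2.2⟩
      · by_cases h : i ∈ σ
        · simp only [hT₁, dif_pos h]; exact (hQ'p _).1
        · simp only [hT₁, dif_neg h]; exact (hT i).1
      · by_cases h : i ∈ σ
        · simp only [hT₁, dif_pos h]; exact (hQ'p _).2.1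
        · simp only [hT₁, dif_neg h]; exact (hT i).2.1
    have hT₁d : Pairwise (Disjoint on T₁) := fun i i' hne =>
      (hTd hne).mono (hT₁sub i) (hT₁sub i')
    obtain ⟨T', hT'p, hT'dead⟩ := ih (fun σ' hσ' => hL σ' (by simp [hσ'])) T₁ hT₁p hT₁d
    refine ⟨T', fun i => ⟨(hT'p i).1, (hT'p i).2.1, ((hT'p i).2.2).trans (hT₁sub i)⟩, ?_⟩
    intro σ' hσ' C hC
    rcases List.mem_cons.mp hσ' with rfl | hmem
    · obtain ⟨j, hj⟩ := hdead C hC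
      refine ⟨(↑(e j) : Fin n), (e j).2, fun hs => hj ?_⟩
      refine Splits.mono ?_ hs
      exact ((hT'p _).2.2).trans (by rw [hT₁val j])
    · exact hT'dead σ' hmem C hC

lemma pattern_process {μ : Measure X} {𝒞 : Set (Set X)} {m : ℕ}
    (h𝒞 : ∀ C ∈ 𝒞, MeasurableSet C)
    (Q : Fin m → Set X)
    (hH : ∀ Q' : Fin m → Set X, (∀ i, MeasurableSet (Q' i) ∧ 0 < μ (Q' i) ∧ Q' i ⊆ Q i) →
      ∃ C ∈ 𝒞, ∀ i, Splits μ C (Q' i))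
    (hQp : ∀ i, MeasurableSet (Q i) ∧ 0 < μ (Q i) ∧ Q i ⊆ Q i)
    (L : List (Finset (Fin m))) :
    ∃ (Q' : Fin m → Set X) (w : Finset (Fin m) → Set X),
      (∀ i, MeasurableSet (Q' i) ∧ 0 < μ (Q' i) ∧ Q' i ⊆ Q i) ∧
      ∀ τ ∈ L, w τ ∈ 𝒞 ∧ ∀ i, (i ∈ τ → Q' i ⊆ w τ) ∧ (i ∉ τ → Q' i ∩ w τ = ∅) := by
  classical
  induction L with
  | nil => exact ⟨Q, fun _ => ∅, hQp, by simp⟩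
  | cons τ L ih =>
    obtain ⟨Q₁, w₁, hQ₁p, hw₁⟩ := ih
    obtain ⟨C, hC𝒞, hCs⟩ := hH Q₁ hQ₁p
    have hCm : MeasurableSet C := h𝒞 C hC𝒞
    set Q₂ : Fin m → Set X := fun i => if i ∈ τ then Q₁ i ∩ C else Q₁ i \ C with hQ₂def
    have hQ₂p : ∀ i, MeasurableSet (Q₂ i) ∧ 0 < μ (Q₂ i) ∧ Q₂ i ⊆ Q i := by
      intro i
      have hsi := (splits_iff).mp (hCs i)
      by_cases h : i ∈ τ
      · refine ⟨?_, ?_, ?_⟩ <;> simp only [hQ₂def, if_pos h]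
        · exact (hQ₁p i).1.inter hCm
        · exact hsi.1
        · exact inter_subset_left.trans (hQ₁p i).2.2
      · refine ⟨?_, ?_, ?_⟩ <;> simp only [hQ₂def, if_neg h]
        · exact (hQ₁p i).1.diff hCm
        · rw [diff_eq]; exact hsi.2
        · exact diff_subset.trans (hQ₁p i).2.2
    have hQ₂sub : ∀ i, Q₂ i ⊆ Q₁ i := by
      intro i
      by_cases h : i ∈ τ
      · simp only [hQ₂def, if_pos h]; exact inter_subset_left
      · simp only [hQ₂def, if_neg h]; exact diff_subset
    have hτgood : ∀ i, (i ∈ τ → Q₂ i ⊆ C) ∧ (i ∉ τ → Q₂ i ∩ C = ∅) := by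
      intro i
      constructor
      · intro h
        simp only [hQ₂def, if_pos h]
        exact inter_subset_right
      · intro h
        simp only [hQ₂def, if_neg h]
        exact diff_inter_self
    refine ⟨Q₂, Function.update w₁ τ C, hQ₂p, ?_⟩
    intro τ' hτ'
    by_cases hcase : τ' = τ
    · subst hcase
      rw [Function.update_self]
      exact ⟨hC𝒞, hτgood⟩
    · rw [Function.update_of_ne hcase]
      have hmem : τ' ∈ L := by
        rcases List.mem_cons.mp hτ' with h | h
        · exact absurd h hcase
        · exact h
      refine ⟨(hw₁ τ' hmem).1, fun i => ⟨?_, ?_⟩⟩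
      · intro h
        exact (hQ₂sub i).trans (((hw₁ τ' hmem).2 i).1 h)
      · intro h
        have := ((hw₁ τ' hmem).2 i).2 h
        exact subset_empty_iff.mp ((inter_subset_inter_left _ (hQ₂sub i)).trans this.subset)



end VCPf

open scoped ENNReal Function in
open VCPf in
/-- **Theorem 2.** If `𝒞` has finite VC dimension, then `𝒞` is finitely approximable with
respect to every probability measure. -/
theorem finiteVC_finitelyApproximable {X : Type*} [MeasurableSpace X]
    (𝒞 : Set (Set X)) (h𝒞 : ∀ C ∈ 𝒞, MeasurableSet C) (hVC : FiniteVC 𝒞)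
    (μ : Measure X) [IsProbabilityMeasure μ] :
    FinitelyApproximable μ 𝒞 := by
  classical
  obtain ⟨k, hk⟩ := hVC
  intro ε hε
  by_contra hno
  push_neg at hno
  -- hno : ∀ π, IsFinitePartition π → ∃ C ∈ 𝒞, ε < μ (piBoundary μ π C)
  set ε' := min ε 1 with hε'def
  have hε'pos : 0 < ε' := lt_min hε zero_lt_one
  have hε'le : ε' ≤ 1 := min_le_right _ _
  have hε'top : ε' ≠ ∞ := (lt_of_le_of_lt hε'le ENNReal.one_lt_top).ne
  have hbX : ε' ≤ vcBeta μ 𝒞 univ := by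
    refine le_iInf₂ fun P hP => ?_
    have hfin : IsFinitePartition P := ⟨hP.1, hP.2.1, hP.2.2.1, hP.2.2.2⟩
    obtain ⟨C, hC, hlt⟩ := hno P hfin
    exact le_trans (le_trans (min_le_left ε 1) hlt.le)
      (le_iSup₂ (f := fun (C : Set X) (_ : C ∈ 𝒞) => μ (piBoundary μ P C)) C hC)
  set δ := ε' / 2 with hδdef
  have hδpos : 0 < δ := ENNReal.half_pos hε'pos.ne'
  have hδtop : δ ≠ ∞ :=
    (lt_of_le_of_lt (ENNReal.half_le_self.trans hε'le) ENNReal.one_lt_top).ne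
  obtain ⟨F, hFp, hFdisj, hFmax⟩ := exists_maxdisj
    (p := fun A => MeasurableSet A ∧ 0 < μ A ∧ vcBeta μ 𝒞 A ≤ δ * μ A)
  have hFc : F.Countable := countable_of_disjoint_pos (fun A hA => (hFp A hA).1) hFdisj
    (fun A hA => (hFp A hA).2.1)
  have hFUm : MeasurableSet (⋃₀ F) := MeasurableSet.sUnion hFc fun A hA => (hFp A hA).1
  set W := univ \ ⋃₀ F with hWdef
  have hWm : MeasurableSet W := MeasurableSet.univ.diff hFUm
  by_cases hWpos : 0 < μ W
  swap
  · push_neg at hWpos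
    have hW0 : μ W = 0 := le_antisymm hWpos zero_le
    have h1 : vcBeta μ 𝒞 univ ≤ vcBeta μ 𝒞 (⋃₀ F) + vcBeta μ 𝒞 W := by
      have := vcBeta_union_le μ 𝒞 hFUm hWm disjoint_sdiff_right
      rwa [union_diff_cancel (subset_univ _)] at this
    have h2 : vcBeta μ 𝒞 (⋃₀ F) ≤ δ * μ (⋃₀ F) + δ / 2 :=
      vcBeta_sUnion_smalls μ 𝒞 hFc hFdisj (fun A hA => ⟨(hFp A hA).1, (hFp A hA).2.2⟩)
        (ENNReal.half_pos hδpos.ne')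
    have h3 : vcBeta μ 𝒞 W ≤ 0 := le_trans (vcBeta_le_measure μ 𝒞 hWm) hW0.le
    have h4 : vcBeta μ 𝒞 univ ≤ δ + δ / 2 := by
      refine h1.trans ?_
      have hδμ : δ * μ (⋃₀ F) ≤ δ := by
        calc δ * μ (⋃₀ F) ≤ δ * 1 := mul_le_mul_right prob_le_one δ
          _ = δ := mul_one δ
      calc vcBeta μ 𝒞 (⋃₀ F) + vcBeta μ 𝒞 W ≤ (δ * μ (⋃₀ F) + δ / 2) + 0 := add_le_add h2 h3
        _ = δ * μ (⋃₀ F) + δ / 2 := by rw [add_zero]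
        _ ≤ δ + δ / 2 := add_le_add_left hδμ _
    have h5 : δ + δ / 2 < ε' := by
      have hhalf : δ / 2 < δ := ENNReal.half_lt_self hδpos.ne' hδtop
      have : δ + δ / 2 < δ + δ := ENNReal.add_lt_add_left hδtop.lt_top.ne hhalf
      rwa [hδdef, ENNReal.add_halves] at this
    exact absurd (hbX.trans h4) h5.not_ge
  have hdens : ∀ Q, MeasurableSet Q → Q ⊆ W → 0 < μ Q → δ * μ Q < vcBeta μ 𝒞 Q := by
    intro Q hQm hQW hQpos
    by_contra hle
    push_neg at hle
    have hQF : Q ∈ F := hFmax Q ⟨hQm, hQpos, hle⟩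
      (fun B hB => (disjoint_sdiff_left.mono_right (subset_sUnion_of_mem hB)).mono_left hQW)
    have h0 : μ Q = 0 := measure_mono_null
      (subset_inter hQW (subset_sUnion_of_mem hQF))
      (by rw [Set.diff_inter_self]; exact measure_empty)
    exact hQpos.ne' h0
  have hsplit : ∀ E, MeasurableSet E → E ⊆ W → 0 < μ E →
      ∃ C ∈ 𝒞, MeasurableSet C ∧ Splits μ C E := by
    intro E hEm hEW hEpos
    have h0 : 0 < vcBeta μ 𝒞 E :=
      lt_trans (ENNReal.mul_pos hδpos.ne' hEpos.ne') (hdens E hEm hEW hEpos)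
    obtain ⟨C, hC, hCs⟩ := exists_splitter hEm h0
    exact ⟨C, hC, h𝒞 C hC, hCs⟩
  set m := k + 1 with hmdef
  obtain ⟨n, hn4⟩ : ∃ n : ℕ, 4 * (m : ℝ≥0∞) < (n : ℝ≥0∞) * δ := by
    obtain ⟨n, hn⟩ := ENNReal.exists_nat_gt
      (ENNReal.div_lt_top (ENNReal.mul_ne_top (by norm_num) (ENNReal.natCast_ne_top m))
        hδpos.ne' : 4 * (m : ℝ≥0∞) / δ < ∞).ne
    refine ⟨n, ?_⟩
    rwa [ENNReal.div_lt_iff (Or.inl hδpos.ne') (Or.inl hδtop)] at hn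
  by_cases hPM : ∃ Q : Fin m → Set X,
      (∀ i, MeasurableSet (Q i) ∧ 0 < μ (Q i) ∧ Q i ⊆ W) ∧ Pairwise (Disjoint on Q) ∧
      ∀ Q' : Fin m → Set X, (∀ i, MeasurableSet (Q' i) ∧ 0 < μ (Q' i) ∧ Q' i ⊆ Q i) →
        ∃ C ∈ 𝒞, ∀ i, Splits μ C (Q' i)
  · -- a hereditary simultaneously-split tuple yields a shattered set of size m = k+1
    obtain ⟨Q, hQp, hQd, hQH⟩ := hPM
    obtain ⟨Q', w, hQ'p, hw⟩ := pattern_process h𝒞 Q hQH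
      (fun i => ⟨(hQp i).1, (hQp i).2.1, subset_rfl⟩)
      (Finset.univ : Finset (Finset (Fin m))).toList
    have hne : ∀ i, (Q' i).Nonempty :=
      fun i => nonempty_of_measure_ne_zero (hQ'p i).2.1.ne'
    set x : Fin m → X := fun i => (hne i).some with hxdef
    have hx : ∀ i, x i ∈ Q' i := fun i => (hne i).some_mem
    have hxQ : ∀ i, x i ∈ Q i := fun i => (hQ'p i).2.2 (hx i)
    have hxinj : Function.Injective x := by
      intro i i' h
      by_contra hne'
      have hdisj := hQd hne'
      have hmem : x i ∈ Q i' := h ▸ hxQ i'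
      exact (Set.disjoint_left.mp hdisj (hxQ i)) hmem
    set D : Finset X := Finset.image x Finset.univ with hDdef
    have hDcard : D.card = m := by
      rw [hDdef, Finset.card_image_of_injective _ hxinj, Finset.card_univ, Fintype.card_fin]
    have hshat : Shatters 𝒞 D := by
      intro B hB
      set τ : Finset (Fin m) := Finset.univ.filter (fun i => x i ∈ B) with hτdef
      have hτmem : τ ∈ (Finset.univ : Finset (Finset (Fin m))).toList := by
        simp [Finset.mem_toList]
      obtain ⟨hwC, hwcond⟩ := hw τ hτmem
      refine ⟨w τ, hwC, ?_⟩
      intro y hy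
      obtain ⟨i, _, rfl⟩ := Finset.mem_image.mp hy
      by_cases hiB : x i ∈ B
      · have hiτ : i ∈ τ := by simp [hτdef, hiB]
        simp only [hiB, iff_true]
        exact (hwcond i).1 hiτ (hx i)
      · have hiτ : i ∉ τ := by simp [hτdef, hiB]
        simp only [hiB, iff_false]
        intro hyC
        have hmem2 : x i ∈ Q' i ∩ w τ := ⟨hx i, hyC⟩
        rw [(hwcond i).2 hiτ] at hmem2
        simpa using hmem2
    have := hk D hshat
    rw [hDcard] at this
    omega
  · push_neg at hPM
    have HFail : ∀ Q : Fin m → Set X,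
        (∀ i, MeasurableSet (Q i) ∧ 0 < μ (Q i) ∧ Q i ⊆ W) → Pairwise (Disjoint on Q) →
        ∃ Q' : Fin m → Set X, (∀ i, MeasurableSet (Q' i) ∧ 0 < μ (Q' i) ∧ Q' i ⊆ Q i) ∧
          ∀ C ∈ 𝒞, ∃ i, ¬ Splits μ C (Q' i) := by
      intro Q hQp hQd
      have h := hPM Q hQp hQd
      exact h
    obtain ⟨R, hRp, hRd⟩ := exists_disjoint_pieces hsplit hWm hWpos n
    obtain ⟨T, hTp, hTdead⟩ := dead_process HFail
      ((Finset.univ.powersetCard m : Finset (Finset (Fin n)))).toList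
      (fun σ hσ => (Finset.mem_powersetCard.mp (Finset.mem_toList.mp hσ)).2) R hRp hRd
    have hTm : ∀ i, MeasurableSet (T i) := fun i => (hTp i).1
    have hTpos : ∀ i, 0 < μ (T i) := fun i => (hTp i).2.1
    have hTW : ∀ i, T i ⊆ W := fun i => ((hTp i).2.2).trans (hRp i).2.2
    have hTd : Pairwise (Disjoint on T) :=
      fun i i' h => (hRd h).mono (hTp i).2.2 (hTp i').2.2
    have hn0 : 0 < n := by
      by_contra h
      push_neg at h
      have hn00 : n = 0 := by omega
      rw [hn00] at hn4
      simp at hn4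
    haveI : Nonempty (Fin n) := ⟨⟨0, hn0⟩⟩
    set t : ℝ≥0∞ := Finset.univ.inf' Finset.univ_nonempty (fun i => μ (T i)) with htdef
    have ht_le : ∀ i, t ≤ μ (T i) := fun i => Finset.inf'_le _ (Finset.mem_univ i)
    have ht_pos : 0 < t := by
      rw [htdef, Finset.lt_inf'_iff]
      exact fun i _ => hTpos i
    set c := t / 2 with hcdef
    have hc0 : 0 < c := ENNReal.half_pos ht_pos.ne'
    have hctop : c ≠ ∞ :=
      ((ENNReal.half_le_self.trans (ht_le ⟨0, hn0⟩)).trans_lt (measure_lt_top μ _)).ne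
    have hcle : ∀ i, c ≤ μ (T i) := fun i => ENNReal.half_le_self.trans (ht_le i)
    have hWin : ∀ i : Fin n, ∃ A, A ⊆ T i ∧ MeasurableSet A ∧ c / 4 ≤ μ A ∧ μ A ≤ c :=
      fun i => exists_window_subset hsplit (hTm i) (hTW i) hc0 (hcle i)
    choose U hUsub hUm hUlo hUhi using hWin
    have hUpos : ∀ i, 0 < μ (U i) :=
      fun i => lt_of_lt_of_le (ENNReal.div_pos hc0.ne' (by norm_num)) (hUlo i)
    have hUd : Pairwise (Disjoint on U) :=
      fun i i' h => (hTd h).mono (hUsub i) (hUsub i')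
    have hUW : ∀ i, U i ⊆ W := fun i => (hUsub i).trans (hTW i)
    have hcount : ∀ C ∈ 𝒞,
        ((Finset.univ : Finset (Fin n)).filter (fun i => Splits μ C (U i))).card < m := by
      intro C hC
      by_contra hge
      push_neg at hge
      obtain ⟨σ, hσsub, hσcard⟩ := Finset.exists_subset_card_eq hge
      have hσL : σ ∈ ((Finset.univ.powersetCard m : Finset (Finset (Fin n)))).toList := by
        rw [Finset.mem_toList, Finset.mem_powersetCard]
        exact ⟨Finset.subset_univ σ, hσcard⟩
      obtain ⟨i, hiσ, hnot⟩ := hTdead σ hσL C hC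
      have hiF := hσsub hiσ
      rw [Finset.mem_filter] at hiF
      exact hnot (Splits.mono (hUsub i) hiF.2)
    set E := ⋃ i, U i with hEdef
    have hEm : MeasurableSet E := MeasurableSet.iUnion hUm
    have hEW : E ⊆ W := iUnion_subset hUW
    have hEsum : μ E = ∑ i : Fin n, μ (U i) := by
      rw [hEdef, measure_iUnion hUd hUm, tsum_fintype]
    have hEpos : 0 < μ E :=
      lt_of_lt_of_le (hUpos ⟨0, hn0⟩) (measure_mono (subset_iUnion U ⟨0, hn0⟩))
    have hPart : IsPartOn (Set.range U) E := by
      refine ⟨finite_range U, ?_, ?_, ?_⟩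
      · rintro A ⟨i, rfl⟩; exact hUm i
      · rintro A ⟨i, rfl⟩ B ⟨i', rfl⟩ hne
        have hii : i ≠ i' := by rintro rfl; exact hne rfl
        exact hUd hii
      · rw [sUnion_range]
    have hup : vcBeta μ 𝒞 E ≤ (k : ℝ≥0∞) * c := by
      refine (vcBeta_le_part μ 𝒞 hPart).trans (iSup₂_le fun C hC => ?_)
      have hsub : piBoundary μ (Set.range U) C ⊆
          ⋃ i ∈ (Finset.univ.filter (fun i => Splits μ C (U i))), U i := by
        intro z hz
        rw [mem_piBoundary] at hz
        obtain ⟨A, ⟨⟨i, rfl⟩, hAs⟩, hzA⟩ := hz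
        exact mem_iUnion₂.mpr ⟨i, by simp [hAs], hzA⟩
      calc μ (piBoundary μ (Set.range U) C)
          ≤ ∑ i ∈ (Finset.univ.filter (fun i => Splits μ C (U i))), μ (U i) :=
            (measure_mono hsub).trans (measure_biUnion_finset_le _ _)
        _ ≤ ((Finset.univ.filter (fun i => Splits μ C (U i))).card) • c :=
            Finset.sum_le_card_nsmul _ _ c (fun i _ => hUhi i)
        _ ≤ (k : ℝ≥0∞) * c := by
            rw [nsmul_eq_mul]
            refine mul_le_mul_left ?_ c
            have hlek : ((Finset.univ.filter (fun i => Splits μ C (U i))).card) ≤ k :=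
              Nat.lt_succ_iff.mp (hcount C hC)
            exact_mod_cast hlek
    have hlow : (n : ℝ≥0∞) * (c / 4) ≤ μ E := by
      rw [hEsum]
      calc (n : ℝ≥0∞) * (c / 4) = (Finset.univ : Finset (Fin n)).card • (c / 4) := by
            rw [nsmul_eq_mul, Finset.card_univ, Fintype.card_fin]
        _ ≤ ∑ i : Fin n, μ (U i) := Finset.card_nsmul_le_sum _ _ _ (fun i _ => hUlo i)
    have hlt1 : δ * μ E < vcBeta μ 𝒞 E := hdens E hEm hEW hEpos
    have hchain1 : δ * ((n : ℝ≥0∞) * (c / 4)) < (k : ℝ≥0∞) * c :=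
      lt_of_le_of_lt (mul_le_mul_right hlow δ) (lt_of_lt_of_le hlt1 hup)
    have hchain2 : (k : ℝ≥0∞) * c < δ * ((n : ℝ≥0∞) * (c / 4)) := by
      have hc4 : c / 4 * 4 = c := ENNReal.div_mul_cancel (by norm_num) (by norm_num)
      have h1 : (k : ℝ≥0∞) * c < (m : ℝ≥0∞) * c := by
        rw [ENNReal.mul_lt_mul_iff_left hc0.ne' hctop]
        exact_mod_cast Nat.lt_succ_self k
      have h2 : (4 * (m : ℝ≥0∞)) * (c / 4) = (m : ℝ≥0∞) * c := by
        calc (4 * (m : ℝ≥0∞)) * (c / 4) = (m : ℝ≥0∞) * (c / 4 * 4) := by ring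
          _ = (m : ℝ≥0∞) * c := by rw [hc4]
      have h3 : (4 * (m : ℝ≥0∞)) * (c / 4) ≤ ((n : ℝ≥0∞) * δ) * (c / 4) :=
        mul_le_mul_left hn4.le _
      calc (k : ℝ≥0∞) * c < (m : ℝ≥0∞) * c := h1
        _ = (4 * (m : ℝ≥0∞)) * (c / 4) := h2.symm
        _ ≤ ((n : ℝ≥0∞) * δ) * (c / 4) := h3
        _ = δ * ((n : ℝ≥0∞) * (c / 4)) := by ring
    exact absurd hchain1 (lt_asymm hchain2)
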